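/- A nonzero torsion abelian group M is a co-Kasch Z-module if and only if pM ≠ M for each prime p with nonzero p-primary component T_p(M); and if M is a not-torsion abelian group, then M is co-Kasch if and only if pM ≠ M for every prime p. -/

import Mathlib

def IsCoKasch (R : Type*) [Ring R] (M : Type*) [AddCommGroup M] [Module R M] : Prop :=
  ∀ (K : Submodule R M) (S : Submodule R (M ⧸ K)), IsSimpleModule R S →
    ∃ f : M →ₗ[R] S, Function.Surjective f

namespace Stmt19Aux

/-- Bridge between the module scalar action of `ℤ` and the canonical `zsmul`. -/
lemma mz {N : Type*} [AddCommGroup N] [Module ℤ N] (k : ℤ) (x : N) :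
    @HSMul.hSMul ℤ N N (@instHSMul ℤ N (Module.toDistribMulAction (R := ℤ) (M := N)).toDistribSMul.toSMulZeroClass.toSMul) k x
      = @HSMul.hSMul ℤ N N (@instHSMul ℤ N ZSMul.toSMul) k x := by
  have := Int.cast_smul_eq_zsmul ℤ k x
  simpa using this

/-- Bezout combination for a prime not dividing `k`. -/
lemma exists_comb {p : ℕ} (hp : p.Prime) {k : ℤ} (hk : ¬ (p : ℤ) ∣ k) :
    ∃ a b : ℤ, a * p + b * k = 1 := by
  have h1 : Nat.Coprime p k.natAbs := by
    refine hp.coprime_iff_not_dvd.mpr fun h => hk ?_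
    refine Int.natAbs_dvd_natAbs.mp ?_
    simpa using h
  have h2 : IsCoprime (p : ℤ) k := by
    rw [Int.isCoprime_iff_gcd_eq_one]
    simpa [Int.gcd] using h1
  exact h2

variable {N : Type*} [AddCommGroup N] [Module ℤ N]

lemma smul_comb {p : ℕ} (hp : p.Prime) {u : N} (hpu : (p : ℤ) • u = 0)
    {k : ℤ} (hk : ¬ (p : ℤ) ∣ k) : ∃ b : ℤ, b • (k • u) = u := by
  obtain ⟨a, b, hab⟩ := exists_comb hp hk
  refine ⟨b, ?_⟩
  calc b • (k • u) = (b * k) • u := (mul_zsmul u b k).symm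
    _ = (a * p) • u + (b * k) • u := by
        rw [mul_zsmul u a (p : ℤ), hpu, zsmul_zero, zero_add]
    _ = (a * p + b * k) • u := (add_zsmul u _ _).symm
    _ = u := by rw [hab, one_zsmul]

lemma dvd_of_smul_eq_zero {p : ℕ} (hp : p.Prime) {u : N} (hu : u ≠ 0)
    (hpu : (p : ℤ) • u = 0) {k : ℤ} (hk : k • u = 0) : (p : ℤ) ∣ k := by
  by_contra h
  obtain ⟨b, hb⟩ := smul_comb hp hpu h
  rw [hk, zsmul_zero] at hb
  exact hu hb.symm

lemma smul_eq_zero_of_dvd {p : ℕ} {u : N} (hpu : (p : ℤ) • u = 0)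
    {k : ℤ} (hk : (p : ℤ) ∣ k) : k • u = 0 := by
  obtain ⟨c, rfl⟩ := hk
  rw [mul_comm, mul_zsmul, hpu, zsmul_zero]

lemma span_isAtom {p : ℕ} (hp : p.Prime) {u : N} (hu : u ≠ 0)
    (hpu : (p : ℤ) • u = 0) : IsAtom (Submodule.span ℤ {u}) := by
  constructor
  · simpa [Submodule.span_singleton_eq_bot] using hu
  · intro b hb
    by_contra hbne
    obtain ⟨x, hxb, hx0⟩ := (Submodule.ne_bot_iff b).mp hbne
    have hxs : x ∈ Submodule.span ℤ {u} := hb.le hxb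
    obtain ⟨k, hk⟩ := Submodule.mem_span_singleton.mp hxs
    have hk' : k • u = x := (mz k u).symm.trans hk
    have hpk : ¬ (p : ℤ) ∣ k := by
      intro h
      exact hx0 (hk' ▸ smul_eq_zero_of_dvd hpu h)
    obtain ⟨c, hc⟩ := smul_comb hp hpu hpk
    rw [hk'] at hc
    have hub : u ∈ b := by
      rw [← hc, ← mz]
      exact Submodule.smul_mem b c hxb
    have hle : Submodule.span ℤ {u} ≤ b := Submodule.span_le.mpr (by simpa using hub)
    exact hb.ne (le_antisymm hb.le hle)

/-- Every simple `ℤ`-module has a generator of prime order. -/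
lemma exists_gen {T : Type*} [AddCommGroup T] [Module ℤ T] (hT : IsSimpleModule ℤ T) :
    ∃ p : ℕ, p.Prime ∧ ∃ t : T, t ≠ 0 ∧ (p : ℤ) • t = 0 ∧ Submodule.span ℤ {t} = ⊤ := by
  haveI := hT
  haveI : Nontrivial T := IsSimpleModule.nontrivial ℤ T
  obtain ⟨s, hs⟩ := exists_ne (0 : T)
  have hspan : ∀ x : T, x ≠ 0 → Submodule.span ℤ {x} = ⊤ := by
    intro x hx
    rcases eq_bot_or_eq_top (Submodule.span ℤ {x}) with h | h
    · exact absurd (Submodule.span_singleton_eq_bot.mp h) hx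
    · exact h
  have hfin : IsOfFinAddOrder s := by
    rcases eq_or_ne ((2 : ℤ) • s) 0 with h2 | h2
    · refine isOfFinAddOrder_iff_nsmul_eq_zero.mpr ⟨2, by norm_num, ?_⟩
      have h' : ((2 : ℕ) : ℤ) • s = 0 := by exact_mod_cast h2
      rw [natCast_zsmul] at h'
      exact h'
    · have htop := hspan _ h2
      have hs' : s ∈ Submodule.span ℤ {(2 : ℤ) • s} := htop ▸ Submodule.mem_top
      obtain ⟨k, hk⟩ := Submodule.mem_span_singleton.mp hs'
      have hk' : k • ((2 : ℤ) • s) = s := (mz k _).symm.trans hk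
      have hz : (k * 2 - 1) • s = 0 := by
        rw [sub_zsmul, one_zsmul, mul_zsmul, hk']
        exact add_neg_cancel s
      have hzne : k * 2 - 1 ≠ 0 := by omega
      refine isOfFinAddOrder_iff_nsmul_eq_zero.mpr
        ⟨(k * 2 - 1).natAbs, Int.natAbs_pos.mpr hzne, ?_⟩
      have habs : (((k * 2 - 1).natAbs : ℤ)) • s = 0 := by
        rcases Int.natAbs_eq (k * 2 - 1) with h | h
        · rw [← h]; exact hz
        · have h' : ((k * 2 - 1).natAbs : ℤ) = -(k * 2 - 1) := by omega
          rw [h', neg_zsmul, hz, neg_zero]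
      rw [natCast_zsmul] at habs
      exact habs
  set n := addOrderOf s with hn
  have hnpos : 0 < n := hfin.addOrderOf_pos
  have hn1 : n ≠ 1 := by
    simpa [hn, AddMonoid.addOrderOf_eq_one_iff] using hs
  have hp : n.minFac.Prime := Nat.minFac_prime hn1
  have hpn : n.minFac ∣ n := Nat.minFac_dvd n
  refine ⟨n.minFac, hp, (n / n.minFac) • s, ?_, ?_, ?_⟩
  · intro h0
    have hdvd : n ∣ n / n.minFac := addOrderOf_dvd_iff_nsmul_eq_zero.mpr h0
    have hlt : n / n.minFac < n := Nat.div_lt_self hnpos hp.one_lt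
    have hpos : 0 < n / n.minFac := Nat.div_pos (Nat.le_of_dvd hnpos hpn) hp.pos
    exact absurd (Nat.le_of_dvd hpos hdvd) (not_le.mpr hlt)
  · rw [natCast_zsmul, ← mul_nsmul, Nat.div_mul_cancel hpn, hn]
    exact addOrderOf_nsmul_eq_zero s
  · refine hspan _ ?_
    intro h0
    have hdvd : n ∣ n / n.minFac := addOrderOf_dvd_iff_nsmul_eq_zero.mpr h0
    have hlt : n / n.minFac < n := Nat.div_lt_self hnpos hp.one_lt
    have hpos : 0 < n / n.minFac := Nat.div_pos (Nat.le_of_dvd hnpos hpn) hp.pos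
    exact absurd (Nat.le_of_dvd hpos hdvd) (not_le.mpr hlt)

/-- If `M` is co-Kasch and some quotient `M ⧸ K` has an element of order exactly the
prime `p`, then multiplication by `p` on `M` is not surjective. -/
lemma not_surj {M : Type} [AddCommGroup M] (hM : IsCoKasch ℤ M) {p : ℕ} (hp : p.Prime)
    (K : Submodule ℤ M) (u : M ⧸ K) (hu : u ≠ 0) (hpu : (p : ℤ) • u = 0) :
    ¬ Function.Surjective (fun m : M => (p : ℤ) • m) := by
  intro hsurj
  have hS : IsSimpleModule ℤ (Submodule.span ℤ {u}) :=
    isSimpleModule_iff_isAtom.mpr (span_isAtom hp hu hpu)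
  obtain ⟨f, hf⟩ := hM K (Submodule.span ℤ {u}) hS
  have hkill : ∀ s : Submodule.span ℤ {u}, (p : ℤ) • s = 0 := by
    intro s
    obtain ⟨k, hk⟩ := Submodule.mem_span_singleton.mp s.2
    refine Subtype.ext ?_
    rw [AddSubgroupClass.coe_zsmul]
    show (p : ℤ) • (s : M ⧸ K) = ((0 : Submodule.span ℤ {u}) : M ⧸ K)
    have hk' : k • u = (s : M ⧸ K) := (mz k u).symm.trans hk
    rw [← hk', ← mul_zsmul, mul_comm, mul_zsmul, hpu, zsmul_zero]
    rfl
  obtain ⟨m, hm⟩ := hf ⟨u, Submodule.mem_span_singleton_self u⟩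
  obtain ⟨m', hm'⟩ := hsurj m
  have hz : (⟨u, Submodule.mem_span_singleton_self u⟩ : Submodule.span ℤ {u}) = 0 := by
    rw [← hm, ← hm']
    show f ((p : ℤ) • m') = 0
    rw [← mz, map_smul, mz]
    exact hkill _
  exact hu (by simpa using congrArg Subtype.val hz)

/-- If multiplication by a prime `p` is not surjective on `M`, then `M` surjects onto
any module generated by an element of order `p`. -/
lemma exists_surj {M : Type} [AddCommGroup M] {T : Type*} [AddCommGroup T] [Module ℤ T]
    {p : ℕ} (hp : p.Prime) {t : T} (ht : t ≠ 0) (hpt : (p : ℤ) • t = 0)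
    (hspan : Submodule.span ℤ {t} = ⊤)
    (h : ¬ Function.Surjective (fun m : M => (p : ℤ) • m)) :
    ∃ f : M →ₗ[ℤ] T, Function.Surjective f := by
  set P : Submodule ℤ M := LinearMap.range ((p : ℤ) • (LinearMap.id : M →ₗ[ℤ] M)) with hPdef
  have happ : ∀ m : M, ((p : ℤ) • (LinearMap.id : M →ₗ[ℤ] M)) m = (p : ℤ) • m := by
    intro m
    rw [LinearMap.smul_apply, LinearMap.id_apply, mz]
  have hmemP : ∀ m : M, (p : ℤ) • m ∈ P := fun m => ⟨m, happ m⟩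
  obtain ⟨x₀, hx₀⟩ : ∃ x₀, x₀ ∉ P := by
    by_contra hc
    push_neg at hc
    apply h
    intro y
    obtain ⟨m, hm⟩ := hc y
    exact ⟨m, (happ m).symm.trans hm⟩
  obtain ⟨W, -, hWmax⟩ := zorn_le_nonempty₀ {W : Submodule ℤ M | P ≤ W ∧ x₀ ∉ W}
    (by
      intro c hc hchain y hy
      refine ⟨sSup c, ⟨le_trans (hc hy).1 (le_sSup hy), ?_⟩, fun z hz => le_sSup hz⟩
      intro hmem
      obtain ⟨q, hq, hxq⟩ := (Submodule.mem_sSup_of_directed ⟨y, hy⟩ hchain.directedOn).mp hmem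
      exact (hc hq).2 hxq)
    P ⟨le_rfl, hx₀⟩
  have hWmem : P ≤ W ∧ x₀ ∉ W := hWmax.1
  have hkillQ : ∀ y : M ⧸ W, (p : ℤ) • y = 0 := by
    intro y
    obtain ⟨m, rfl⟩ := Submodule.Quotient.mk_surjective W y
    have hmem : ((p : ℤ) • m : M) ∈ W := hWmem.1 (hmemP m)
    rw [← Submodule.mkQ_apply, ← map_zsmul W.mkQ, Submodule.mkQ_apply]
    exact (Submodule.Quotient.mk_eq_zero W).mpr hmem
  set u : M ⧸ W := Submodule.Quotient.mk x₀ with hudef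
  have hu : u ≠ 0 := fun h0 => hWmem.2 ((Submodule.Quotient.mk_eq_zero W).mp h0)
  have huspan : Submodule.span ℤ {u} = ⊤ := by
    rw [eq_top_iff]
    intro y _
    rcases eq_or_ne y 0 with rfl | hy0
    · exact Submodule.zero_mem _
    obtain ⟨m, rfl⟩ := Submodule.Quotient.mk_surjective W y
    set W' : Submodule ℤ M :=
      Submodule.comap W.mkQ (Submodule.span ℤ {Submodule.Quotient.mk m}) with hW'def
    have hWW' : W ≤ W' := by
      intro w hw
      show W.mkQ w ∈ Submodule.span ℤ {Submodule.Quotient.mk m}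
      have hw0 : W.mkQ w = 0 := (Submodule.Quotient.mk_eq_zero W).mpr hw
      rw [hw0]; exact Submodule.zero_mem _
    have hx₀W' : x₀ ∈ W' := by
      by_contra hx
      have hW's : W' ∈ {W : Submodule ℤ M | P ≤ W ∧ x₀ ∉ W} := ⟨le_trans hWmem.1 hWW', hx⟩
      have hle : W' ≤ W := hWmax.2 hW's hWW'
      have hmW : m ∈ W := hle (by
        show W.mkQ m ∈ Submodule.span ℤ {Submodule.Quotient.mk m}
        exact Submodule.mem_span_singleton_self _)
      exact hy0 ((Submodule.Quotient.mk_eq_zero W).mpr hmW)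
    have hus : u ∈ Submodule.span ℤ {Submodule.Quotient.mk (p := W) m} := hx₀W'
    obtain ⟨k, hk⟩ := Submodule.mem_span_singleton.mp hus
    have hk' : k • (Submodule.Quotient.mk (p := W) m) = u := (mz k _).symm.trans hk
    have hpk : ¬ (p : ℤ) ∣ k := by
      intro hdvd
      exact hu (hk' ▸ smul_eq_zero_of_dvd (hkillQ _) hdvd)
    obtain ⟨b, hb⟩ := smul_comb hp (hkillQ (Submodule.Quotient.mk m)) hpk
    rw [hk'] at hb
    have hy : Submodule.Quotient.mk (p := W) m = b • u := hb.symm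
    rw [hy, ← mz]
    exact Submodule.smul_mem _ b (Submodule.mem_span_singleton_self u)
  set ℓ : ℤ →ₗ[ℤ] M ⧸ W := LinearMap.toSpanSingleton ℤ (M ⧸ W) u with hldef
  set ℓ' : ℤ →ₗ[ℤ] T := LinearMap.toSpanSingleton ℤ T t with hl'def
  have hℓ : Function.Surjective ℓ := by
    rw [← LinearMap.range_eq_top, ← LinearMap.span_singleton_eq_range]
    exact huspan
  have hℓ' : Function.Surjective ℓ' := by
    rw [← LinearMap.range_eq_top, ← LinearMap.span_singleton_eq_range]
    exact hspan
  have hker : LinearMap.ker ℓ ≤ LinearMap.ker ℓ' := by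
    intro k hk
    have hk0 : k • u = 0 := by
      have hlk : ℓ k = 0 := hk
      rw [hldef, LinearMap.toSpanSingleton_apply, mz] at hlk
      exact hlk
    have hdvd : (p : ℤ) ∣ k := dvd_of_smul_eq_zero hp hu (hkillQ u) hk0
    show ℓ' k = 0
    rw [hl'def, LinearMap.toSpanSingleton_apply, mz]
    exact smul_eq_zero_of_dvd hpt hdvd
  have hcomap : LinearMap.ker ℓ ≤ Submodule.comap LinearMap.id (LinearMap.ker ℓ') :=
    fun k hk => hker hk
  set e₁ := ℓ.quotKerEquivOfSurjective hℓ with he₁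
  set e₂ := ℓ'.quotKerEquivOfSurjective hℓ' with he₂
  set g : (ℤ ⧸ LinearMap.ker ℓ) →ₗ[ℤ] ℤ ⧸ LinearMap.ker ℓ' :=
    Submodule.mapQ _ _ LinearMap.id hcomap with hgdef
  have hg : Function.Surjective g := by
    intro z
    obtain ⟨k, rfl⟩ := Submodule.Quotient.mk_surjective _ z
    exact ⟨Submodule.Quotient.mk k, by rw [hgdef, Submodule.mapQ_apply]; rfl⟩
  refine ⟨e₂.toLinearMap ∘ₗ g ∘ₗ e₁.symm.toLinearMap ∘ₗ W.mkQ, ?_⟩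
  simp only [LinearMap.coe_comp, LinearEquiv.coe_coe]
  exact e₂.surjective.comp (hg.comp (e₁.symm.surjective.comp
    (Submodule.Quotient.mk_surjective W)))

/-- Infinite order elements are killed only by `0`. -/
lemma eq_zero_of_infinite_order {M : Type} [AddCommGroup M] {x : M}
    (hx : ¬ IsOfFinAddOrder x) {z : ℤ} (hz : z • x = 0) : z = 0 := by
  by_contra h0
  apply hx
  refine isOfFinAddOrder_iff_nsmul_eq_zero.mpr ⟨z.natAbs, Int.natAbs_pos.mpr h0, ?_⟩
  have habs : ((z.natAbs : ℤ)) • x = 0 := by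
    rcases Int.natAbs_eq z with h | h
    · rw [← h]; exact hz
    · have h' : (z.natAbs : ℤ) = -z := by omega
      rw [h', neg_zsmul, hz, neg_zero]
  rw [natCast_zsmul] at habs
  exact habs

end Stmt19Aux

open Stmt19Aux in
/-- (a) A nonzero torsion abelian group `M` is co-Kasch iff `pM ≠ M` for
every prime `p` whose primary component `T_p(M)` is nonzero.  (b) A non-torsion abelian
group `M` is co-Kasch iff `pM ≠ M` for every prime `p`. -/
theorem stmt19 (M : Type) [AddCommGroup M] :
    (AddMonoid.IsTorsion M → Nontrivial M →
      (IsCoKasch ℤ M ↔ ∀ p : ℕ, p.Prime →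
        (∃ m : M, m ≠ 0 ∧ ∃ n : ℕ, ((p : ℤ) ^ n) • m = 0) →
        ¬ Function.Surjective (fun m : M => (p : ℤ) • m))) ∧
    (¬ AddMonoid.IsTorsion M →
      (IsCoKasch ℤ M ↔ ∀ p : ℕ, p.Prime →
        ¬ Function.Surjective (fun m : M => (p : ℤ) • m))) := by
  constructor
  · intro htor _hnt
    constructor
    · -- co-Kasch → condition
      rintro hCK p hp ⟨m, hm0, n, hmn⟩
      classical
      have hex : ∃ j : ℕ, ((p : ℤ) ^ j) • m = 0 := ⟨n, hmn⟩
      have hn₀spec : ((p : ℤ) ^ (Nat.find hex)) • m = 0 := Nat.find_spec hex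
      have hn₀pos : Nat.find hex ≠ 0 := by
        intro h0
        rw [h0, pow_zero, one_zsmul] at hn₀spec
        exact hm0 hn₀spec
      have hu' : ((p : ℤ) ^ (Nat.find hex - 1)) • m ≠ 0 :=
        Nat.find_min hex (Nat.sub_lt (Nat.pos_of_ne_zero hn₀pos) one_pos)
      have hpu' : (p : ℤ) • (((p : ℤ) ^ (Nat.find hex - 1)) • m) = 0 := by
        rw [← mul_zsmul, ← pow_succ']
        have he : Nat.find hex - 1 + 1 = Nat.find hex := by omega
        rw [he]
        exact hn₀spec
      set u : M ⧸ (⊥ : Submodule ℤ M) :=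
        Submodule.Quotient.mk (((p : ℤ) ^ (Nat.find hex - 1)) • m) with hudef
      have hu : u ≠ 0 := by
        intro h0
        exact hu' ((Submodule.Quotient.mk_eq_zero ⊥).mp h0)
      have hpu : (p : ℤ) • u = 0 := by
        rw [hudef, ← Submodule.mkQ_apply, ← map_zsmul, hpu', map_zero]
      exact not_surj hCK hp ⊥ u hu hpu
    · -- condition → co-Kasch
      intro hcond K S hS
      obtain ⟨p, hp, t, ht, hpt, hspan⟩ := exists_gen hS
      have hcoe : ((t : M ⧸ K)) ≠ 0 := by
        simpa using ht
      obtain ⟨x, hx⟩ := Submodule.Quotient.mk_surjective K (t : M ⧸ K)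
      have hxfin : IsOfFinAddOrder x := htor x
      have hnpos : 0 < addOrderOf x := hxfin.addOrderOf_pos
      have h1 : addOrderOf ((t : M ⧸ K)) ∣ p := by
        rw [addOrderOf_dvd_iff_nsmul_eq_zero, ← natCast_zsmul]
        have h0 : (((p : ℤ) • t : S) : M ⧸ K) = 0 := by rw [hpt]; rfl
        rw [AddSubgroupClass.coe_zsmul] at h0
        exact h0
      have h2 : addOrderOf ((t : M ⧸ K)) ∣ addOrderOf x := by
        rw [addOrderOf_dvd_iff_nsmul_eq_zero, ← hx]
        have hmk : Submodule.Quotient.mk (p := K) ((addOrderOf x) • x)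
            = (addOrderOf x) • Submodule.Quotient.mk (p := K) x :=
          map_nsmul K.mkQ (addOrderOf x) x
        rw [← hmk, addOrderOf_nsmul_eq_zero]
        rfl
      have hne1 : addOrderOf ((t : M ⧸ K)) ≠ 1 := by
        simpa [AddMonoid.addOrderOf_eq_one_iff] using hcoe
      have hop : addOrderOf ((t : M ⧸ K)) = p := ((Nat.dvd_prime hp).mp h1).resolve_left hne1
      have hpn : p ∣ addOrderOf x := hop ▸ h2
      have hwit : ∃ m : M, m ≠ 0 ∧ ∃ k : ℕ, ((p : ℤ) ^ k) • m = 0 := by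
        refine ⟨(addOrderOf x / p) • x, ?_, 1, ?_⟩
        · intro h0
          have hdvd : addOrderOf x ∣ addOrderOf x / p := addOrderOf_dvd_iff_nsmul_eq_zero.mpr h0
          have hlt : addOrderOf x / p < addOrderOf x := Nat.div_lt_self hnpos hp.one_lt
          have hpos : 0 < addOrderOf x / p := Nat.div_pos (Nat.le_of_dvd hnpos hpn) hp.pos
          exact absurd (Nat.le_of_dvd hpos hdvd) (not_le.mpr hlt)
        · rw [pow_one, natCast_zsmul, ← mul_nsmul, Nat.div_mul_cancel hpn]
          exact addOrderOf_nsmul_eq_zero x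
      exact exists_surj hp ht hpt hspan (hcond p hp hwit)
  · intro hntor
    constructor
    · intro hCK p hp
      obtain ⟨x, hx⟩ : ∃ x : M, ¬ IsOfFinAddOrder x := by
        by_contra hc
        push_neg at hc
        exact hntor hc
      set K : Submodule ℤ M := Submodule.span ℤ {(p : ℤ) • x} with hKdef
      set u : M ⧸ K := Submodule.Quotient.mk x with hudef
      have hpu : (p : ℤ) • u = 0 := by
        rw [hudef, ← Submodule.mkQ_apply, ← map_zsmul K.mkQ, Submodule.mkQ_apply]
        exact (Submodule.Quotient.mk_eq_zero K).mpr (Submodule.mem_span_singleton_self _)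
      have hu : u ≠ 0 := by
        intro h0
        have hxK : x ∈ K := (Submodule.Quotient.mk_eq_zero K).mp h0
        obtain ⟨k, hk⟩ := Submodule.mem_span_singleton.mp hxK
        have hk' : k • ((p : ℤ) • x) = x := (mz k _).symm.trans hk
        have hz : (1 - k * p) • x = 0 := by
          rw [sub_zsmul, one_zsmul, mul_zsmul, hk']
          exact add_neg_cancel x
        have h10 := eq_zero_of_infinite_order hx hz
        have hkp : k * (p : ℤ) = 1 := by omega
        have hdvd : (p : ℤ) ∣ 1 := ⟨k, by rw [← hkp]; ring⟩
        have hle := Int.le_of_dvd one_pos hdvd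
        have h2le := hp.two_le
        omega
      exact not_surj hCK hp K u hu hpu
    · intro hcond K S hS
      obtain ⟨p, hp, t, ht, hpt, hspan⟩ := exists_gen hS
      exact exists_surj hp ht hpt hspan (hcond p hp)
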